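/- Let Σ be an n×n real symmetric positive definite matrix, let δ be an n×n real symmetric positive semidefinite matrix, and set Σ' = Σ + δ. If |Tr(δ·Σ⁻¹)| ≤ 1/3, then |1 − √(det Σ)/√(det Σ')| ≤ ‖δ‖_F · ‖Σ⁻¹‖_F. -/

import Mathlib

open Matrix

lemma det_one_add_bounds {n : ℕ} (M : Matrix (Fin n) (Fin n) ℝ) (hM : M.PosSemidef) :
    0 ≤ M.trace ∧ 1 ≤ (1 + M).det ∧ (1 + M).det ≤ Real.exp M.trace := by
  have hH := hM.1
  set U := (hH.eigenvectorUnitary : Matrix (Fin n) (Fin n) ℝ) with hUdef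
  have hU1 : U * star U = 1 := Matrix.mem_unitaryGroup_iff.mp hH.eigenvectorUnitary.2
  have hU2 : star U * U = 1 := Matrix.mem_unitaryGroup_iff'.mp hH.eigenvectorUnitary.2
  set μ := hH.eigenvalues with hμdef
  have hspec : M = U * diagonal (RCLike.ofReal ∘ μ) * star U := hH.spectral_theorem
  have hofReal : (RCLike.ofReal ∘ μ : Fin n → ℝ) = μ := by
    funext i; simp [RCLike.ofReal]
  rw [hofReal] at hspec
  have htr : M.trace = ∑ i, μ i := by
    rw [hspec, Matrix.trace_mul_comm, ← mul_assoc, hU2, one_mul, Matrix.trace_diagonal]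
  have hμ0 : ∀ i, 0 ≤ μ i := hM.eigenvalues_nonneg
  have hdet : (1 + M).det = ∏ i, (1 + μ i) := by
    have h1M : 1 + M = U * diagonal (fun i => 1 + μ i) * star U := by
      have : diagonal (fun i => (1:ℝ) + μ i) = 1 + diagonal μ := by
        rw [← diagonal_one, ← diagonal_add]
      rw [this, hspec]
      rw [mul_add, add_mul, mul_one, hU1]
    rw [h1M, Matrix.det_mul, Matrix.det_mul, mul_comm, ← mul_assoc, ← Matrix.det_mul, hU2]
    simp [Matrix.det_diagonal]
  refine ⟨?_, ?_, ?_⟩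
  · rw [htr]; exact Finset.sum_nonneg fun i _ => hμ0 i
  · rw [hdet]
    calc (1:ℝ) = ∏ _i : Fin n, 1 := by simp
      _ ≤ ∏ i, (1 + μ i) := Finset.prod_le_prod (fun i _ => zero_le_one)
          (fun i _ => by linarith [hμ0 i])
  · rw [hdet, htr, Real.exp_sum]
    exact Finset.prod_le_prod (fun i _ => by linarith [hμ0 i])
      (fun i _ => by linarith [Real.add_one_le_exp (μ i)])

/-- Frobenius norm of a real square matrix. -/
noncomputable def frobNorm {n : ℕ} (A : Matrix (Fin n) (Fin n) ℝ) : ℝ :=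
  Real.sqrt (∑ i, ∑ j, (A i j) ^ 2)

theorem det_ratio_bound {n : ℕ} (S δ : Matrix (Fin n) (Fin n) ℝ)
    (hS : S.PosDef) (hδ : δ.PosSemidef)
    (htr : |(δ * S⁻¹).trace| ≤ 1 / 3) :
    |1 - Real.sqrt S.det / Real.sqrt (S + δ).det| ≤ frobNorm δ * frobNorm S⁻¹ := by
  classical
  have hSps := hS.posSemidef
  obtain ⟨R, hRps, hRR⟩ : ∃ R : Matrix (Fin n) (Fin n) ℝ, R.PosSemidef ∧ R * R = S :=
    open scoped MatrixOrder in
    ⟨CFC.sqrt S, (CFC.sqrt_nonneg S).posSemidef, CFC.sqrt_mul_sqrt_self S hSps.nonneg⟩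
  have hSdet : 0 < S.det := hS.det_pos
  have hRdet : R.det ≠ 0 := by
    intro h
    rw [← hRR, Matrix.det_mul, h, mul_zero] at hSdet
    exact lt_irrefl _ hSdet
  have hRinv : R * R⁻¹ = 1 := Matrix.mul_nonsing_inv R (isUnit_iff_ne_zero.mpr hRdet)
  have hRinv' : R⁻¹ * R = 1 := Matrix.nonsing_inv_mul R (isUnit_iff_ne_zero.mpr hRdet)
  have hRinvH : R⁻¹ᴴ = R⁻¹ := hRps.inv.1
  set M := R⁻¹ * δ * R⁻¹ with hMdef
  have hM : M.PosSemidef := by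
    have := hδ.mul_mul_conjTranspose_same R⁻¹
    rwa [hRinvH] at this
  -- trace M = trace (δ * S⁻¹)
  have hSinv : S⁻¹ = R⁻¹ * R⁻¹ := by rw [← hRR, Matrix.mul_inv_rev]
  have htrM : M.trace = (δ * S⁻¹).trace := by
    rw [hMdef, Matrix.trace_mul_comm, ← mul_assoc, Matrix.trace_mul_comm, ← hSinv]
  -- det(S+δ) = det S * det(1+M)
  have hfact : S + δ = R * (1 + M) * R := by
    rw [hMdef, mul_add, mul_one, add_mul, hRR]
    congr 1
    rw [← mul_assoc, ← mul_assoc, hRinv, one_mul, mul_assoc, hRinv', mul_one]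
  have hdetfact : (S + δ).det = S.det * (1 + M).det := by
    rw [hfact, Matrix.det_mul, Matrix.det_mul, mul_comm, ← mul_assoc, ← Matrix.det_mul, hRR]
  obtain ⟨htr0, hdet1, hdet2⟩ := det_one_add_bounds M hM
  set t := M.trace with htdef
  have hSd' : 0 < (S + δ).det := by
    rw [hdetfact]; positivity
  -- the ratio r
  set r := Real.sqrt S.det / Real.sqrt (S + δ).det with hrdef
  have hr0 : 0 ≤ r := by positivity
  have hr1 : r ≤ 1 := by
    rw [hrdef, div_le_one (Real.sqrt_pos.mpr hSd')]
    apply Real.sqrt_le_sqrt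
    nlinarith [hSdet]
  have hrlow : 1 - t / 2 ≤ r := by
    have hexp : Real.exp (-(t/2)) ≤ r := by
      have h1 : Real.sqrt (Real.exp (-t)) = Real.exp (-(t/2)) := by
        rw [show -t = -(t/2) + -(t/2) by ring, Real.exp_add,
          Real.sqrt_mul_self (Real.exp_pos _).le]
      have h2 : Real.exp (-t) ≤ S.det / (S + δ).det := by
        rw [hdetfact, le_div_iff₀ (by positivity)]
        calc Real.exp (-t) * (S.det * (1 + M).det)
            ≤ Real.exp (-t) * (S.det * Real.exp t) := by
              exact mul_le_mul_of_nonneg_left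
                (mul_le_mul_of_nonneg_left hdet2 hSdet.le) (Real.exp_pos _).le
          _ = S.det := by
              rw [show Real.exp (-t) * (S.det * Real.exp t)
                  = S.det * (Real.exp (-t) * Real.exp t) by ring,
                ← Real.exp_add, neg_add_cancel, Real.exp_zero, mul_one]
      calc Real.exp (-(t/2)) = Real.sqrt (Real.exp (-t)) := h1.symm
        _ ≤ Real.sqrt (S.det / (S + δ).det) := Real.sqrt_le_sqrt h2
        _ = r := by rw [hrdef, Real.sqrt_div hSdet.le]
    have := Real.add_one_le_exp (-(t/2))
    linarith
  -- Cauchy-Schwarz: t ≤ frobNorm δ * frobNorm S⁻¹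
  have hCS : t ≤ frobNorm δ * frobNorm S⁻¹ := by
    have htsum : t = ∑ p : Fin n × Fin n, δ p.1 p.2 * S⁻¹ p.2 p.1 := by
      rw [htrM, Matrix.trace, Fintype.sum_prod_type]
      simp [Matrix.mul_apply, Matrix.diag]
    have hcs := Finset.sum_mul_sq_le_sq_mul_sq Finset.univ
      (fun p : Fin n × Fin n => δ p.1 p.2) (fun p => S⁻¹ p.2 p.1)
    rw [← htsum] at hcs
    have hA : (∑ p : Fin n × Fin n, (δ p.1 p.2) ^ 2) = ∑ i, ∑ j, (δ i j) ^ 2 := by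
      rw [Fintype.sum_prod_type]
    have hB : (∑ p : Fin n × Fin n, (S⁻¹ p.2 p.1) ^ 2) = ∑ i, ∑ j, (S⁻¹ i j) ^ 2 := by
      rw [Fintype.sum_prod_type]
      exact Finset.sum_comm
    rw [hA, hB] at hcs
    have h1 : t ≤ |t| := le_abs_self t
    have h2 : |t| = Real.sqrt (t ^ 2) := (Real.sqrt_sq_eq_abs t).symm
    calc t ≤ Real.sqrt (t ^ 2) := h2 ▸ h1
      _ ≤ Real.sqrt ((∑ i, ∑ j, (δ i j) ^ 2) * (∑ i, ∑ j, (S⁻¹ i j) ^ 2)) :=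
          Real.sqrt_le_sqrt hcs
      _ = frobNorm δ * frobNorm S⁻¹ := by
          rw [frobNorm, frobNorm, ← Real.sqrt_mul]
          positivity
  rw [abs_sub_comm, abs_of_nonpos (by linarith), neg_sub]
  linarith
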